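/- Consider the planar system ẍ + 2ẏ − x − x³ − xy² = 0, ÿ − 2ẋ − y − y³ − x²y = 0 on ℝ². Every nonconstant solution (x(t), y(t)) satisfies d²/dt²((x²+y²)/2) = (ẋ+y)² + (ẏ−x)² + (x²+y²)² > 0 whenever (x,y) ≠ (0,0); consequently the only periodic solution is the equilibrium (0,0). -/

import Mathlib

/-- For the planar system `ẍ + 2ẏ - x - x³ - xy² = 0`, `ÿ - 2ẋ - y - y³ - x²y = 0`:
along any solution, `d²/dt²((x²+y²)/2) = (ẋ+y)² + (ẏ-x)² + (x²+y²)²`, which is strictly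
positive wherever `(x,y) ≠ (0,0)`; consequently the only periodic solution is the
equilibrium `(0,0)`. -/
theorem no_nontrivial_periodic_solution
    (x y : ℝ → ℝ) (hx : ContDiff ℝ 2 x) (hy : ContDiff ℝ 2 y)
    (heqx : ∀ t, deriv (deriv x) t + 2 * deriv y t
        - x t - (x t) ^ 3 - x t * (y t) ^ 2 = 0)
    (heqy : ∀ t, deriv (deriv y) t - 2 * deriv x t
        - y t - (y t) ^ 3 - (x t) ^ 2 * y t = 0) :
    (∀ t : ℝ,
        deriv (deriv (fun s => ((x s) ^ 2 + (y s) ^ 2) / 2)) t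
          = (deriv x t + y t) ^ 2 + (deriv y t - x t) ^ 2
              + ((x t) ^ 2 + (y t) ^ 2) ^ 2
        ∧ ((x t, y t) ≠ (0, 0) →
            0 < (deriv x t + y t) ^ 2 + (deriv y t - x t) ^ 2
                + ((x t) ^ 2 + (y t) ^ 2) ^ 2))
      ∧ (∀ T : ℝ, 0 < T → (∀ t, x (t + T) = x t ∧ y (t + T) = y t) →
          ∀ t, x t = 0 ∧ y t = 0) := by
  have hx2' : ContDiff ℝ (1 + 1 : ℕ) x := by exact_mod_cast hx
  have hy2' : ContDiff ℝ (1 + 1 : ℕ) y := by exact_mod_cast hy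
  have hx1 : Differentiable ℝ x := hx.differentiable two_ne_zero
  have hy1 : Differentiable ℝ y := hy.differentiable two_ne_zero
  have hx2 : Differentiable ℝ (deriv x) :=
    (contDiff_succ_iff_deriv.mp hx2').2.2.differentiable one_ne_zero
  have hy2 : Differentiable ℝ (deriv y) :=
    (contDiff_succ_iff_deriv.mp hy2').2.2.differentiable one_ne_zero
  set f : ℝ → ℝ := fun s => ((x s) ^ 2 + (y s) ^ 2) / 2 with hf
  have hder1 : ∀ t, HasDerivAt f (x t * deriv x t + y t * deriv y t) t := by
    intro t
    have h1 := (hx1 t).hasDerivAt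
    have h2 := (hy1 t).hasDerivAt
    have := ((h1.pow 2).add (h2.pow 2)).div_const 2
    refine this.congr_deriv ?_
    ring
  have hdf : deriv f = fun t => x t * deriv x t + y t * deriv y t :=
    funext fun t => (hder1 t).deriv
  have hder2 : ∀ t, HasDerivAt (deriv f)
      ((deriv x t + y t) ^ 2 + (deriv y t - x t) ^ 2
        + ((x t) ^ 2 + (y t) ^ 2) ^ 2) t := by
    intro t
    have h1 := (hx1 t).hasDerivAt
    have h2 := (hy1 t).hasDerivAt
    have h3 := (hx2 t).hasDerivAt
    have h4 := (hy2 t).hasDerivAt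
    have key := (h1.mul h3).add (h2.mul h4)
    rw [hdf]
    have hxx : deriv (deriv x) t
        = x t + (x t) ^ 3 + x t * (y t) ^ 2 - 2 * deriv y t := by
      have := heqx t; linarith
    have hyy : deriv (deriv y) t
        = y t + (y t) ^ 3 + (x t) ^ 2 * y t + 2 * deriv x t := by
      have := heqy t; linarith
    refine key.congr_deriv ?_
    rw [hxx, hyy]; ring
  have hdd : ∀ t, deriv (deriv f) t
      = (deriv x t + y t) ^ 2 + (deriv y t - x t) ^ 2
        + ((x t) ^ 2 + (y t) ^ 2) ^ 2 := fun t => (hder2 t).deriv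
  constructor
  · intro t
    refine ⟨hdd t, fun h => ?_⟩
    have hne : x t ≠ 0 ∨ y t ≠ 0 := by
      by_contra hc
      push_neg at hc
      exact h (by simp [hc.1, hc.2])
    have hpos : 0 < (x t) ^ 2 + (y t) ^ 2 := by
      rcases hne with h' | h'
      · have := sq_nonneg (y t); positivity
      · have := sq_nonneg (x t); positivity
    nlinarith [sq_nonneg (deriv x t + y t), sq_nonneg (deriv y t - x t),
      pow_pos hpos 2]
  · intro T hT hper t
    -- deriv f is monotone
    have hnn : ∀ s, 0 ≤ deriv (deriv f) s := by
      intro s; rw [hdd s]; positivity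
    have hmono : Monotone (deriv f) :=
      monotone_of_deriv_nonneg (fun s => (hder2 s).differentiableAt) hnn
    -- deriv f is T-periodic
    have hperf : ∀ s, f (s + T) = f s := by
      intro s; simp only [hf, (hper s).1, (hper s).2]
    have hperdf : ∀ s, deriv f (s + T) = deriv f s := by
      intro s
      have : (fun u => f (u + T)) = f := funext hperf
      calc deriv f (s + T) = deriv (fun u => f (u + T)) s :=
            (deriv_comp_add_const f T s).symm
        _ = deriv f s := by rw [this]
    -- deriv f is constant on [t - T, t + T]
    have hend : deriv f (t - T) = deriv f (t + T) := by
      have h1 := hperdf (t - T)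
      have h2 := hperdf t
      rw [sub_add_cancel] at h1
      rw [← h1, ← h2]
    have hconst : ∀ s ∈ Set.Ioo (t - T) (t + T), deriv f s = deriv f t := by
      intro s hs
      have h1 : deriv f s ≤ deriv f (t + T) := hmono hs.2.le
      have h2 : deriv f (t - T) ≤ deriv f s := hmono hs.1.le
      have h3 : deriv f (t - T) ≤ deriv f t := hmono (by linarith)
      have h4 : deriv f t ≤ deriv f (t + T) := hmono (by linarith)
      rw [hend] at h2 h3
      linarith
    have hzero : deriv (deriv f) t = 0 := by
      have hmem : Set.Ioo (t - T) (t + T) ∈ nhds t :=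
        Ioo_mem_nhds (by linarith) (by linarith)
      have heq : deriv f =ᶠ[nhds t] fun _ => deriv f t :=
        Filter.eventuallyEq_of_mem hmem hconst
      rw [heq.deriv_eq, deriv_const]
    by_contra hc
    push_neg at hc
    have hne : (x t, y t) ≠ (0, 0) := by
      intro h
      rw [Prod.mk.injEq] at h
      rcases Classical.em (x t = 0) with h' | h'
      · exact hc h' h.2
      · exact h' h.1
    have hpos : 0 < (x t) ^ 2 + (y t) ^ 2 := by
      rcases Classical.em (x t = 0) with h' | h''
      · have hy' : y t ≠ 0 := fun hy0 => hne (by simp [h', hy0])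
        have := sq_nonneg (x t); positivity
      · have := sq_nonneg (y t); positivity
    have : 0 < deriv (deriv f) t := by
      rw [hdd t]
      nlinarith [sq_nonneg (deriv x t + y t), sq_nonneg (deriv y t - x t),
        pow_pos hpos 2]
    linarith [hzero]
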